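/- Let A ∈ ℂ^{N×N} be positive semidefinite Hermitian with rank A ≤ m for some integer m ≥ 1, and suppose tr A ≤ m·λ for some λ > 0. Let α ∈ (0,1), β = 1 − α, ρ > 0, and c = 1/(βρ). Then log₂ det( I_N + (α/β) · (diag{A} + c·I_N)^{-1} · A ) ≤ m · log₂( 1 + αλN / (λmβ + N/ρ) ). -/

import Mathlib

open Finset

/-- AM-GM: product ≤ (sum/card)^card -/
lemma amgm {ι : Type*} (s : Finset ι) (z : ι → ℝ) (hz : ∀ i ∈ s, 0 ≤ z i) :
    ∏ i ∈ s, z i ≤ ((∑ i ∈ s, z i) / s.card) ^ (s.card) := by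
  rcases s.eq_empty_or_nonempty with rfl | hne
  · simp
  have hcard : (0:ℝ) < s.card := by exact_mod_cast hne.card_pos
  have h := Real.geom_mean_le_arith_mean s (fun _ => 1) z (fun _ _ => zero_le_one) (by simpa using hcard) hz
  simp only [Real.rpow_one, one_mul, Finset.sum_const, nsmul_eq_mul, mul_one] at h
  have hprod : 0 ≤ ∏ i ∈ s, z i := Finset.prod_nonneg hz
  calc ∏ i ∈ s, z i = ((∏ i ∈ s, z i) ^ ((s.card : ℝ))⁻¹) ^ (s.card : ℝ) := by
        rw [← Real.rpow_mul hprod, inv_mul_cancel₀ (ne_of_gt hcard), Real.rpow_one]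
    _ ≤ ((∑ i ∈ s, z i) / s.card) ^ (s.card : ℝ) := by
        apply Real.rpow_le_rpow (Real.rpow_nonneg hprod _) h (le_of_lt hcard)
    _ = _ := by rw [Real.rpow_natCast]


lemma prod_one_add_le {N m : ℕ} (hm : 1 ≤ m) (μ : Fin N → ℝ) (hμ : ∀ i, 0 ≤ μ i)
    (hcard : (Finset.univ.filter fun i => μ i ≠ 0).card ≤ m) {t s0 : ℝ} (ht : 0 ≤ t)
    (hs : ∑ i, μ i ≤ s0) :
    ∏ i, (1 + t * μ i) ≤ (1 + t * s0 / m) ^ m := by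
  classical
  set T := Finset.univ.filter fun i => μ i ≠ 0 with hT
  set k := T.card with hk
  set σ := ∑ i ∈ T, μ i with hσ
  have hσ0 : 0 ≤ σ := Finset.sum_nonneg fun i _ => hμ i
  have hσs : σ ≤ s0 := le_trans (Finset.sum_le_sum_of_subset_of_nonneg (Finset.subset_univ T)
    (fun i _ _ => hμ i)) hs
  have hs0 : 0 ≤ s0 := le_trans hσ0 hσs
  have hmpos : (0:ℝ) < m := by exact_mod_cast hm
  have hprodT : ∏ i, (1 + t * μ i) = ∏ i ∈ T, (1 + t * μ i) := by
    refine (Finset.prod_subset (Finset.subset_univ T) ?_).symm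
    intro x _ hx
    simp only [hT, Finset.mem_filter, Finset.mem_univ, true_and, not_not] at hx
    simp [hx]
  rcases Nat.eq_zero_or_pos k with hk0 | hkpos
  · have : T = ∅ := Finset.card_eq_zero.mp hk0
    rw [hprodT, this, Finset.prod_empty]
    exact one_le_pow₀ (le_add_of_nonneg_right (by positivity))
  · have hkR : (0:ℝ) < k := by exact_mod_cast hkpos
    have hsumT : ∑ i ∈ T, (1 + t * μ i) = k + t * σ := by
      rw [Finset.sum_add_distrib, Finset.sum_const, ← Finset.mul_sum, ← hσ]
      simp [nsmul_eq_mul, hk]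
    have step1 : ∏ i ∈ T, (1 + t * μ i) ≤ (1 + t * σ / k) ^ k := by
      have h := amgm T (fun i => 1 + t * μ i)
        (fun i _ => by have h0 := mul_nonneg ht (hμ i); show (0:ℝ) ≤ 1 + t * μ i; linarith)
      rw [hsumT, ← hk] at h
      have : ((k : ℝ) + t * σ) / k = 1 + t * σ / k := by field_simp
      rwa [this] at h
    set c := 1 + t * σ / k with hc
    have hc1 : (1:ℝ) ≤ c := by
      have h0 : 0 ≤ t * σ / k := by positivity
      rw [hc]; linarith
    set z : ℕ → ℝ := fun j => if j < k then c else 1 with hz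
    have hkm : k ≤ m := hcard
    have hprodz : ∏ j ∈ Finset.range m, z j = c ^ k := by
      rw [← Finset.prod_subset (Finset.range_subset_range.2 hkm)
        (fun x _ hx => by simp [hz, Finset.mem_range.not.mp hx])]
      have hcg : ∀ x ∈ Finset.range k, z x = c := fun x hx => by
        simp [hz, Finset.mem_range.mp hx]
      rw [Finset.prod_congr rfl hcg, Finset.prod_const, Finset.card_range]
    have hsumz : ∑ j ∈ Finset.range m, z j = m + t * σ := by
      have hzeq : ∀ j, z j = 1 + (if j < k then t * σ / k else 0) := by
        intro j; simp only [hz, hc]; split <;> simp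
      simp only [hzeq]
      rw [Finset.sum_add_distrib, Finset.sum_const]
      have h2 : ∑ j ∈ Finset.range m, (if j < k then t * σ / k else 0) = t * σ := by
        rw [← Finset.sum_subset (Finset.range_subset_range.2 hkm)
          (fun x _ hx => by simp [Finset.mem_range.not.mp hx])]
        have hcg : ∀ x ∈ Finset.range k, (if x < k then t * σ / k else 0) = t * σ / k :=
          fun x hx => by simp [Finset.mem_range.mp hx]
        rw [Finset.sum_congr rfl hcg, Finset.sum_const, Finset.card_range, nsmul_eq_mul]
        field_simp
      rw [h2, Finset.card_range, nsmul_eq_mul, mul_one]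
    have step2 : c ^ k ≤ (1 + t * σ / m) ^ m := by
      have h := amgm (Finset.range m) z
        (fun i _ => by simp only [hz]; split; exacts [by linarith, zero_le_one])
      rw [hprodz, hsumz, Finset.card_range] at h
      have : ((m : ℝ) + t * σ) / m = 1 + t * σ / m := by field_simp
      rwa [this] at h
    have step3 : (1 + t * σ / m) ^ m ≤ (1 + t * s0 / m) ^ m := by
      gcongr
    calc ∏ i, (1 + t * μ i) = ∏ i ∈ T, (1 + t * μ i) := hprodT
      _ ≤ c ^ k := step1
      _ ≤ (1 + t * σ / m) ^ m := step2
      _ ≤ _ := step3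

lemma sum_div_bound {N : ℕ} (a : Fin N → ℝ) (ha : ∀ i, 0 ≤ a i) {c s1 : ℝ} (hc : 0 < c)
    (hs1 : 0 < s1) (hS : ∑ i, a i ≤ s1) :
    ∑ i, a i / (a i + c) ≤ N * s1 / (s1 + N * c) := by
  rcases Nat.eq_zero_or_pos N with hN | hN
  · subst hN; simp
  have hNR : (0:ℝ) < N := by exact_mod_cast hN
  set S := ∑ i, a i with hSdef
  have hS0 : 0 ≤ S := Finset.sum_nonneg fun i _ => ha i
  have hd : ∀ i, 0 < a i + c := fun i => by have := ha i; linarith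
  set Q := ∑ i, (a i + c)⁻¹ with hQdef
  have hQ0 : 0 ≤ Q := Finset.sum_nonneg fun i _ => (inv_nonneg).2 (le_of_lt (hd i))
  have hsumsq : ∑ i, (a i + c) = S + N * c := by
    rw [Finset.sum_add_distrib, Finset.sum_const]
    simp [nsmul_eq_mul, mul_comm, hSdef]
  have hcs : (N:ℝ)^2 ≤ (S + N * c) * Q := by
    have h := Finset.sum_mul_sq_le_sq_mul_sq Finset.univ
      (fun i => Real.sqrt (a i + c)) (fun i => (Real.sqrt (a i + c))⁻¹)
    have e1 : ∀ i : Fin N, Real.sqrt (a i + c) * (Real.sqrt (a i + c))⁻¹ = 1 :=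
      fun i => mul_inv_cancel₀ (ne_of_gt (Real.sqrt_pos.2 (hd i)))
    have e2 : ∀ i : Fin N, Real.sqrt (a i + c) ^ 2 = a i + c :=
      fun i => Real.sq_sqrt (le_of_lt (hd i))
    have e3 : ∀ i : Fin N, ((Real.sqrt (a i + c))⁻¹) ^ 2 = (a i + c)⁻¹ :=
      fun i => by rw [inv_pow, e2 i]
    simp only [e1, e2, e3, Finset.sum_const, Finset.card_univ, Fintype.card_fin,
      nsmul_eq_mul, mul_one] at h
    rw [hsumsq] at h
    exact_mod_cast h
  have hrewrite : ∑ i, a i / (a i + c) = N - c * Q := by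
    have : ∀ i : Fin N, a i / (a i + c) = 1 - c * (a i + c)⁻¹ := fun i => by
      field_simp [(hd i).ne']
      ring
    simp only [this]
    rw [Finset.sum_sub_distrib, Finset.sum_const, ← Finset.mul_sum]
    simp [nsmul_eq_mul, hQdef]
  rw [hrewrite]
  have hden1 : (0:ℝ) < S + N * c := by positivity
  have hden2 : (0:ℝ) < s1 + N * c := by positivity
  have step1 : (N:ℝ) - c * Q ≤ N * S / (S + N * c) := by
    rw [le_div_iff₀ hden1]
    nlinarith [hcs, hc.le]
  have step2 : (N:ℝ) * S / (S + N * c) ≤ N * s1 / (s1 + N * c) := by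
    rw [div_le_div_iff₀ hden1 hden2]
    nlinarith [mul_le_mul_of_nonneg_left hS (by positivity : (0:ℝ) ≤ (N:ℝ)*(N:ℝ)*c)]
  linarith

open Matrix BigOperators ComplexOrder

lemma diag_add_smul_one {n : Type*} [Fintype n] [DecidableEq n] (w : n → ℂ) (s : ℂ) :
    Matrix.diagonal w + s • (1 : Matrix n n ℂ) = Matrix.diagonal (fun i => w i + s) := by
  ext i j
  by_cases h : i = j
  · subst h; simp
  · simp [Matrix.one_apply_ne h, Matrix.diagonal_apply_ne _ h]

lemma one_add_smul_diag {n : Type*} [Fintype n] [DecidableEq n] (v : n → ℂ) (s : ℂ) :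
    (1 : Matrix n n ℂ) + s • Matrix.diagonal v = Matrix.diagonal (fun i => 1 + s * v i) := by
  ext i j
  by_cases h : i = j
  · subst h; simp
  · simp [Matrix.one_apply_ne h, Matrix.diagonal_apply_ne _ h]

theorem stmt10 (N m : ℕ) (hm : 1 ≤ m)
    (A : Matrix (Fin N) (Fin N) ℂ) (hA : A.PosSemidef) (hrank : A.rank ≤ m)
    (lam : ℝ) (hlam : 0 < lam) (htr : A.trace.re ≤ m * lam)
    (α ρ : ℝ) (hα : α ∈ Set.Ioo (0 : ℝ) 1) (hρ : 0 < ρ) :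
    Real.logb 2
        (1 + ((α / (1 - α) : ℝ) : ℂ) •
            ((Matrix.diagonal A.diag + ((1 / ((1 - α) * ρ) : ℝ) : ℂ) • 1)⁻¹ * A)).det.re ≤
      m * Real.logb 2 (1 + α * lam * N / (lam * m * (1 - α) + N / ρ)) := by
  classical
  obtain ⟨hα0, hα1⟩ := hα
  set β : ℝ := 1 - α with hβdef
  have hβ : 0 < β := by simp only [hβdef]; linarith
  set c : ℝ := 1 / (β * ρ) with hcdef
  have hc : 0 < c := by positivity
  set t : ℝ := α / β with htdef
  have ht : 0 < t := by positivity
  set a : Fin N → ℝ := fun i => (A i i).re with hadef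
  have hdiag : ∀ i, A i i = (a i : ℂ) := fun i => (hA.1.coe_re_apply_self i).symm
  have ha : ∀ i, 0 ≤ a i := by
    intro i
    have h := hA.re_dotProduct_nonneg (Pi.single i 1)
    simpa [dotProduct, Matrix.mulVec, Pi.single_apply, Finset.sum_ite_eq,
      hadef] using h
  set d : Fin N → ℝ := fun i => a i + c with hddef
  have hd : ∀ i, 0 < d i := fun i => by have := ha i; simp only [hddef]; linarith
  set E : Matrix (Fin N) (Fin N) ℂ := Matrix.diagonal (fun i => ((d i)⁻¹ : ℝ)) with hEdef
  have h1 : Matrix.diagonal A.diag + ((c : ℝ) : ℂ) • 1 =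
      Matrix.diagonal (fun i => ((d i : ℝ) : ℂ)) := by
    rw [diag_add_smul_one]
    refine congrArg Matrix.diagonal (funext fun i => ?_)
    show A i i + (c : ℂ) = ((d i : ℝ) : ℂ)
    rw [hdiag i, hddef]; push_cast; ring
  have h2 : (Matrix.diagonal A.diag + ((c : ℝ) : ℂ) • 1)⁻¹ = E := by
    rw [h1]
    apply Matrix.inv_eq_left_inv
    rw [hEdef, Matrix.diagonal_mul_diagonal, ← Matrix.diagonal_one]
    refine congrArg Matrix.diagonal (funext fun i => ?_)
    have hne : d i ≠ 0 := (hd i).ne'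
    rw [← Complex.ofReal_mul, inv_mul_cancel₀ hne, Complex.ofReal_one]
  set g : Fin N → ℝ := fun i => (Real.sqrt (d i))⁻¹ with hgdef
  have hg2 : ∀ i, g i * g i = (d i)⁻¹ := fun i => by
    rw [hgdef, ← mul_inv, Real.mul_self_sqrt (hd i).le]
  set G : Matrix (Fin N) (Fin N) ℂ := Matrix.diagonal (fun i => ((g i : ℝ) : ℂ)) with hGdef
  have hGG : G * G = E := by
    rw [hGdef, Matrix.diagonal_mul_diagonal, hEdef]
    refine congrArg Matrix.diagonal (funext fun i => ?_)
    rw [← Complex.ofReal_mul, hg2 i]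
  set M : Matrix (Fin N) (Fin N) ℂ := G * A * G with hMdef
  have hGH : Gᴴ = G := by
    rw [hGdef, Matrix.diagonal_conjTranspose]
    refine congrArg Matrix.diagonal (funext fun i => ?_)
    simp [Pi.star_apply, Complex.star_def, Complex.conj_ofReal]
  have hM : M.PosSemidef := by
    have := hA.mul_mul_conjTranspose_same G
    rwa [hGH] at this
  set μ : Fin N → ℝ := hM.1.eigenvalues with hμdef
  have hμ0 : ∀ i, 0 ≤ μ i := fun i => hM.eigenvalues_nonneg i
  set U : Matrix (Fin N) (Fin N) ℂ := (hM.1.eigenvectorUnitary : Matrix (Fin N) (Fin N) ℂ)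
    with hUdef
  have hUU : U * star U = 1 := (Matrix.mem_unitaryGroup_iff).mp (hM.1.eigenvectorUnitary).2
  have hUU' : star U * U = 1 := (Matrix.mem_unitaryGroup_iff').mp (hM.1.eigenvectorUnitary).2
  have hspec : M = U * Matrix.diagonal (RCLike.ofReal ∘ μ) * star U := hM.1.spectral_theorem
  have hdet : (1 + ((t : ℝ) : ℂ) • (E * A)).det = ((∏ i, (1 + t * μ i) : ℝ) : ℂ) := by
    have e1 : ((t : ℝ) : ℂ) • (E * A) = (((t : ℝ) : ℂ) • G) * (G * A) := by
      rw [smul_mul_assoc, ← Matrix.mul_assoc, hGG]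
    have e2 : (G * A) * (((t : ℝ) : ℂ) • G) = ((t : ℝ) : ℂ) • M := by
      rw [mul_smul_comm, Matrix.mul_assoc, hMdef, Matrix.mul_assoc]
    rw [e1, Matrix.det_one_add_mul_comm, e2]
    have e3 : U * (Matrix.diagonal (fun i => 1 + ((t : ℝ) : ℂ) * ((μ i : ℝ) : ℂ))) * star U
        = (1 : Matrix (Fin N) (Fin N) ℂ) + ((t : ℝ) : ℂ) • M := by
      have hD : Matrix.diagonal (fun i => 1 + ((t : ℝ) : ℂ) * ((μ i : ℝ) : ℂ))
          = 1 + ((t : ℝ) : ℂ) • Matrix.diagonal (RCLike.ofReal ∘ μ) := by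
        rw [one_add_smul_diag]
        refine congrArg Matrix.diagonal (funext fun i => ?_)
        simp [Function.comp, RCLike.ofReal]
      rw [hD, mul_add, add_mul, mul_one, hUU, mul_smul_comm, smul_mul_assoc, ← hspec]
    rw [← e3, Matrix.det_mul_right_comm, hUU, Matrix.one_mul, Matrix.det_diagonal]
    push_cast
    ring
  have htr1 : M.trace = ((∑ i, a i / d i : ℝ) : ℂ) := by
    rw [hMdef, Matrix.trace_mul_cycle, hGG]
    simp only [Matrix.trace, Matrix.diag_apply, hEdef, Matrix.diagonal_mul]
    push_cast
    apply Finset.sum_congr rfl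
    intro i _
    simp [hdiag i, div_eq_inv_mul]
  have htr2 : M.trace = ((∑ i, μ i : ℝ) : ℂ) := by
    rw [hspec, Matrix.trace_mul_cycle, hUU', Matrix.one_mul, Matrix.trace_diagonal]
    push_cast
    rfl
  have hμsum : ∑ i, μ i = ∑ i, a i / d i := by
    have h := htr2.symm.trans htr1
    exact_mod_cast h
  have hrankM : (Finset.univ.filter fun i => μ i ≠ 0).card ≤ m := by
    have h1' : M.rank ≤ A.rank :=
      le_trans (Matrix.rank_mul_le_left (G * A) G) (Matrix.rank_mul_le_right G A)
    have h2' : M.rank = Fintype.card {i // μ i ≠ 0} := hM.1.rank_eq_card_non_zero_eigs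
    have h3' : Fintype.card {i // μ i ≠ 0} = (Finset.univ.filter fun i => μ i ≠ 0).card :=
      Fintype.card_subtype _
    rw [← h3', ← h2']
    exact le_trans h1' hrank
  -- trace of A in terms of a
  have htrA : A.trace.re = ∑ i, a i := by
    rw [Matrix.trace]
    simp [Matrix.diag_apply, Complex.re_sum, hadef]
  have hS : ∑ i, a i ≤ m * lam := htrA ▸ htr
  have hmlam : (0:ℝ) < m * lam := by
    have : (0:ℝ) < m := by exact_mod_cast hm
    positivity
  set s0 : ℝ := N * (m * lam) / (m * lam + N * c) with hs0def
  have hsum_le : ∑ i, μ i ≤ s0 := by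
    rw [hμsum]
    exact sum_div_bound a ha hc hmlam hS
  set P : ℝ := ∏ i, (1 + t * μ i) with hPdef
  have hP1 : (1:ℝ) ≤ P := by
    rw [hPdef]
    calc (1:ℝ) = ∏ _i : Fin N, (1:ℝ) := by simp
      _ ≤ ∏ i, (1 + t * μ i) := Finset.prod_le_prod (fun i _ => zero_le_one)
          (fun i _ => by have h0 := mul_nonneg ht.le (hμ0 i); linarith)
  have hprod_le : P ≤ (1 + t * s0 / m) ^ m :=
    prod_one_add_le hm μ hμ0 hrankM ht.le hsum_le
  have hkey : t * s0 / m = α * lam * N / (lam * m * β + N / ρ) := by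
    have hd1 : (0:ℝ) < m * lam + N * c := by positivity
    have hd2 : (0:ℝ) < lam * m * β + N / ρ := by positivity
    have hmR : (0:ℝ) < m := by exact_mod_cast hm
    rw [hs0def, htdef, hcdef]
    field_simp
  have hX : (0:ℝ) < 1 + α * lam * N / (lam * m * β + N / ρ) := by
    have hd2 : (0:ℝ) < lam * m * β + N / ρ := by positivity
    positivity
  -- rewrite goal
  rw [h2, hdet, Complex.ofReal_re]
  calc Real.logb 2 P ≤ Real.logb 2 ((1 + t * s0 / m) ^ m) :=
        Real.logb_le_logb_of_le one_lt_two (by linarith) hprod_le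
    _ = m * Real.logb 2 (1 + t * s0 / m) := Real.logb_pow 2 _ m
    _ = m * Real.logb 2 (1 + α * lam * N / (lam * m * β + N / ρ)) := by rw [hkey]
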